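/- Let ξ be uniformly distributed on [0,1) and T > 0. Let b = e^{i+ξ} where i is the smallest integer with e^{i+ξ} ≥ T. Then E[b] = T(e − 1). -/
import Mathlib


open MeasureTheory

lemma exp_int_integral (k a b : ℝ) (hab : a ≤ b) :
    ∫ ξ in Set.Ico a b, Real.exp (k + ξ) = Real.exp (k + b) - Real.exp (k + a) := by
  rw [MeasureTheory.integral_Ico_eq_integral_Ioo, ← MeasureTheory.integral_Ioc_eq_integral_Ioo,
    ← intervalIntegral.integral_of_le hab]
  simp only [Real.exp_add]
  rw [intervalIntegral.integral_const_mul, integral_exp]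
  ring

/-- Let `ξ` be uniform on `[0,1)` and `T > 0`. Let `b = e^(i+ξ)` where `i` is the
smallest integer with `e^(i+ξ) ≥ T`, i.e. `i = ⌈log T - ξ⌉`. Then
`E[b] = T (e - 1)`. -/
theorem stmt5 (T : ℝ) (hT : 0 < T) :
    ∫ ξ in Set.Ico (0 : ℝ) 1, Real.exp ((⌈Real.log T - ξ⌉ : ℝ) + ξ)
      = T * (Real.exp 1 - 1) := by
  set c := Real.log T with hc
  set n : ℤ := ⌊c⌋ with hn
  set f : ℝ := Int.fract c with hf
  have hf0 : 0 ≤ f := Int.fract_nonneg c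
  have hf1 : f < 1 := Int.fract_lt_one c
  have hnf : (n : ℝ) + f = c := Int.floor_add_fract c
  have hceil1 : ∀ ξ ∈ Set.Ico (0:ℝ) f, (⌈c - ξ⌉ : ℤ) = n + 1 := by
    intro ξ hξ
    rw [Int.ceil_eq_iff]
    push_cast
    constructor
    · linarith [hξ.2]
    · linarith [hξ.1, hf1]
  have hceil2 : ∀ ξ ∈ Set.Ico f (1:ℝ), (⌈c - ξ⌉ : ℤ) = n := by
    intro ξ hξ
    rw [Int.ceil_eq_iff]
    push_cast
    constructor
    · linarith [hξ.2]
    · linarith [hξ.1]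
  have hsplit : Set.Ico (0:ℝ) 1 = Set.Ico 0 f ∪ Set.Ico f 1 :=
    (Set.Ico_union_Ico_eq_Ico hf0 hf1.le).symm
  have hint : ∀ k a b : ℝ, IntegrableOn (fun ξ => Real.exp (k + ξ)) (Set.Ico a b) volume := by
    intro k a b
    exact ((Real.continuous_exp.comp (continuous_const.add continuous_id)).integrableOn_Icc).mono_set
      Set.Ico_subset_Icc_self
  have e1 : ∫ ξ in Set.Ico (0:ℝ) f, Real.exp ((⌈c - ξ⌉ : ℝ) + ξ)
      = ∫ ξ in Set.Ico (0:ℝ) f, Real.exp (((n:ℝ) + 1) + ξ) := by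
    apply setIntegral_congr_fun measurableSet_Ico
    intro ξ hξ
    simp only [hceil1 ξ hξ]
    push_cast
    ring_nf
  have e2 : ∫ ξ in Set.Ico f (1:ℝ), Real.exp ((⌈c - ξ⌉ : ℝ) + ξ)
      = ∫ ξ in Set.Ico f (1:ℝ), Real.exp ((n:ℝ) + ξ) := by
    apply setIntegral_congr_fun measurableSet_Ico
    intro ξ hξ
    simp only [hceil2 ξ hξ]
  have hi1 : IntegrableOn (fun ξ => Real.exp ((⌈c - ξ⌉ : ℝ) + ξ)) (Set.Ico (0:ℝ) f) volume := by
    apply (hint ((n:ℝ)+1) 0 f).congr_fun _ measurableSet_Ico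
    intro ξ hξ
    simp only [hceil1 ξ hξ]
    push_cast
    ring_nf
  have hi2 : IntegrableOn (fun ξ => Real.exp ((⌈c - ξ⌉ : ℝ) + ξ)) (Set.Ico f (1:ℝ)) volume := by
    apply (hint (n:ℝ) f 1).congr_fun _ measurableSet_Ico
    intro ξ hξ
    simp only [hceil2 ξ hξ]
  have hdisj : Disjoint (Set.Ico (0:ℝ) f) (Set.Ico f 1) := by
    apply Set.disjoint_left.mpr
    rintro x ⟨_, h2⟩ ⟨h3, _⟩
    exact absurd h3 (not_le.mpr h2)
  rw [hsplit, setIntegral_union hdisj measurableSet_Ico hi1 hi2,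
    e1, e2, exp_int_integral _ _ _ hf0, exp_int_integral _ _ _ hf1.le]
  have hT' : Real.exp c = T := Real.exp_log hT
  have : Real.exp ((n:ℝ) + f) = T := by rw [hnf, hT']
  have h2 : Real.exp (((n:ℝ)+1) + f) = T * Real.exp 1 := by
    rw [show ((n:ℝ)+1) + f = ((n:ℝ)+f) + 1 by ring, Real.exp_add, this]
  have h3 : Real.exp (((n:ℝ)+1) + 0) = Real.exp (n:ℝ) * Real.exp 1 := by
    rw [add_zero, Real.exp_add]
  have h4 : Real.exp ((n:ℝ) + 1) = Real.exp (n:ℝ) * Real.exp 1 := Real.exp_add _ _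
  have h5 : Real.exp ((n:ℝ) + f) = T := this
  rw [h2, h3, h4]
  nlinarith [h5, Real.exp_add (n:ℝ) f, Real.exp_pos (n:ℝ)]
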